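/- Let y ∈ ℝⁿ and let S₁,…,S_r be a random partition of [n] where each index i is placed independently and uniformly at random into one of the r bins. Let γ_j = ∑_{i∈S_j} |y_i|. If ‖y‖₂ < ‖y‖₁/β, then for any fixed j, P(γ_j ≤ ‖y‖₁/(2r)) ≤ exp(−β²/(8r)). -/

import Mathlib

open MeasureTheory ProbabilityTheory Finset

/-- For `x ≥ 0`, `exp (-x) ≤ 1 - x + x²/2`. -/
lemma exp_neg_le_quad {x : ℝ} (hx : 0 ≤ x) : Real.exp (-x) ≤ 1 - x + x ^ 2 / 2 := by
  have hder : ∀ z : ℝ, HasDerivAt (fun u : ℝ => 1 - u + u ^ 2 / 2 - Real.exp (-u))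
      (-1 + (2 * z ^ 1) / 2 - Real.exp (-z) * (-1)) z := by
    intro z
    have h1 : HasDerivAt (fun u : ℝ => 1 - u) (-1) z := by
      simpa using (hasDerivAt_id z).const_sub 1
    have h2 : HasDerivAt (fun u : ℝ => u ^ 2 / 2) ((2 * z ^ 1) / 2) z :=
      (hasDerivAt_pow 2 z).div_const 2
    have h3 : HasDerivAt (fun u : ℝ => Real.exp (-u)) (Real.exp (-z) * (-1)) z :=
      (hasDerivAt_neg z).exp
    exact (h1.add h2).sub h3
  have hmono : MonotoneOn (fun u : ℝ => 1 - u + u ^ 2 / 2 - Real.exp (-u)) (Set.Ici 0) := by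
    apply monotoneOn_of_deriv_nonneg (convex_Ici 0)
    · exact Continuous.continuousOn (by continuity)
    · intro z _
      exact (hder z).differentiableAt.differentiableWithinAt
    · intro z hz
      rw [(hder z).deriv]
      have := Real.add_one_le_exp (-z)
      simp only [interior_Ici, Set.mem_Ioi] at hz
      nlinarith
  have h0 : (fun u : ℝ => 1 - u + u ^ 2 / 2 - Real.exp (-u)) 0 ≤
      (fun u : ℝ => 1 - u + u ^ 2 / 2 - Real.exp (-u)) x :=
    hmono (Set.self_mem_Ici) hx hx
  simp only [neg_zero, Real.exp_zero] at h0
  nlinarith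

set_option maxHeartbeats 1000000 in
/-- single-bin lower-tail bound for a random partition.
Each index `i ∈ [n]` is hashed independently and uniformly into one of `r` bins
(the uniform law on `Fin r` is `r⁻¹ • count`). -/
theorem stmt8 {Ω : Type*} [MeasurableSpace Ω] (P : Measure Ω) [IsProbabilityMeasure P]
    (n r : ℕ) (hr : 0 < r) (y : Fin n → ℝ) (β : ℝ) (hβ : 0 < β)
    (σ : Ω → Fin n → Fin r) (hmeas : ∀ i, Measurable fun ω => σ ω i)
    (hindep : iIndepFun (fun i ω => σ ω i) P)
    (hunif : ∀ i, Measure.map (fun ω => σ ω i) P = (r : ENNReal)⁻¹ • Measure.count)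
    (hdense : Real.sqrt (∑ i, (y i) ^ 2) < (∑ i, |y i|) / β)
    (j : Fin r) :
    P {ω | ∑ i ∈ Finset.univ.filter (fun i => σ ω i = j), |y i|
            ≤ (∑ i, |y i|) / (2 * r)}
      ≤ ENNReal.ofReal (Real.exp (-β ^ 2 / (8 * r))) := by
  classical
  set L : ℝ := ∑ i, |y i| with hLdef
  set Q : ℝ := ∑ i, (y i) ^ 2 with hQdef
  have hQ0 : 0 ≤ Q := Finset.sum_nonneg fun i _ => sq_nonneg _
  have hLβ : 0 < L / β := lt_of_le_of_lt (Real.sqrt_nonneg Q) hdense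
  have hL0 : 0 < L := by
    have := mul_pos hLβ hβ
    rwa [div_mul_cancel₀ _ hβ.ne'] at this
  have hQpos : 0 < Q := by
    rcases hQ0.lt_or_eq with h | h
    · exact h
    · exfalso
      have hy : ∀ i ∈ Finset.univ, (y i) ^ 2 = 0 :=
        (Finset.sum_eq_zero_iff_of_nonneg (fun i _ => sq_nonneg _)).mp h.symm
      have : L = 0 := Finset.sum_eq_zero fun i _ => by
        have := hy i (Finset.mem_univ i)
        have : y i = 0 := by nlinarith
        simp [this]
      linarith
  -- β² Q < L²
  have hβQ : β ^ 2 * Q < L ^ 2 := by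
    have h1 : β * Real.sqrt Q < L := by
      have := (mul_lt_mul_iff_right₀ hβ).mpr hdense
      rwa [mul_div_cancel₀ _ hβ.ne'] at this
    have h2 : (β * Real.sqrt Q) ^ 2 < L ^ 2 := by
      apply sq_lt_sq' _ h1
      nlinarith [mul_nonneg hβ.le (Real.sqrt_nonneg Q)]
    have h3 : (Real.sqrt Q) ^ 2 = Q := Real.sq_sqrt hQ0
    nlinarith
  have hrR : (0 : ℝ) < r := Nat.cast_pos.mpr hr
  -- the Chernoff parameter
  set t : ℝ := -(L / (2 * Q)) with htdef
  have hs0 : 0 < L / (2 * Q) := by positivity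
  have ht0 : t ≤ 0 := by simp [htdef]; positivity
  set ε : ℝ := L / (2 * r) with hεdef
  -- the random variables
  set g : Fin n → Fin r → ℝ := fun i k => if k = j then |y i| else 0 with hgdef
  set X : Fin n → Ω → ℝ := fun i => g i ∘ (fun ω => σ ω i) with hXdef
  have hXmeas : ∀ i, Measurable (X i) := fun i => (Measurable.of_discrete (f := g i)).comp (hmeas i)
  have hXnn : ∀ i ω, 0 ≤ X i ω := by
    intro i ω
    simp only [hXdef, hgdef, Function.comp_apply]
    split <;> simp [abs_nonneg]
  have hindepX : iIndepFun X P :=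
    hindep.comp g fun i => Measurable.of_discrete (f := g i)
  -- integrability
  have hint : ∀ (f : Ω → ℝ), Measurable f → (∀ ω, 0 ≤ f ω) →
      Integrable (fun ω => Real.exp (t * f ω)) P := by
    intro f hf h0
    refine Integrable.mono' (integrable_const 1)
      ((hf.const_mul t).exp.aestronglyMeasurable) ?_
    filter_upwards with ω
    rw [Real.norm_eq_abs, abs_of_pos (Real.exp_pos _)]
    exact Real.exp_le_one_iff.mpr (mul_nonpos_of_nonpos_of_nonneg ht0 (h0 ω))
  have hSmeas : Measurable (∑ i, X i) := by
    have h := Finset.measurable_sum Finset.univ fun i (_ : i ∈ Finset.univ) => hXmeas i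
    have : (∑ i, X i) = fun a => ∑ i, X i a := by ext a; simp [Finset.sum_apply]
    rwa [this]
  have hSnn : ∀ ω, 0 ≤ (∑ i, X i) ω := by
    intro ω
    rw [Finset.sum_apply]
    exact Finset.sum_nonneg fun i _ => hXnn i ω
  -- Chernoff bound
  have hchern := measure_le_le_exp_mul_mgf (μ := P) (X := ∑ i, X i) ε ht0
    (hint _ hSmeas hSnn)
  rw [hindepX.mgf_sum hXmeas] at hchern
  -- compute the mgf of each X i
  have hmgf : ∀ i, mgf (X i) P t = 1 + (Real.exp (t * |y i|) - 1) / r := by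
    intro i
    have hcomp : (fun ω => Real.exp (t * X i ω)) =
        (fun k : Fin r => Real.exp (t * g i k)) ∘ (fun ω => σ ω i) := rfl
    rw [mgf]
    calc ∫ ω, Real.exp (t * X i ω) ∂P
        = ∫ k, Real.exp (t * g i k) ∂(Measure.map (fun ω => σ ω i) P) := by
          rw [integral_map (hmeas i).aemeasurable
            (Measurable.of_discrete (f := fun k : Fin r => Real.exp (t * g i k))).aestronglyMeasurable]
          rfl
      _ = ((r : ENNReal)⁻¹).toReal • ∫ k, Real.exp (t * g i k) ∂Measure.count := by
          rw [hunif i, integral_smul_measure]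
      _ = (r : ℝ)⁻¹ * ∑ k : Fin r, Real.exp (t * g i k) := by
          rw [integral_fintype _]
          · simp [Measure.real, Measure.count_singleton, smul_eq_mul]
          · exact Integrable.of_finite
      _ = 1 + (Real.exp (t * |y i|) - 1) / r := by
          have hsum : ∑ k : Fin r, Real.exp (t * g i k) =
              ∑ k : Fin r, (1 + if k = j then Real.exp (t * |y i|) - 1 else 0) := by
            apply Finset.sum_congr rfl
            intro k _
            simp only [hgdef]
            split <;> simp [Real.exp_zero]
          rw [hsum, Finset.sum_add_distrib, Finset.sum_ite_eq' Finset.univ j]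
          simp only [Finset.sum_const, Finset.card_univ, Fintype.card_fin, nsmul_eq_mul,
            mul_one, Finset.mem_univ, if_true]
          field_simp
  -- bound each mgf
  have hmgf_le : ∀ i, mgf (X i) P t ≤ Real.exp ((Real.exp (t * |y i|) - 1) / r) := by
    intro i
    rw [hmgf i]
    have := Real.add_one_le_exp ((Real.exp (t * |y i|) - 1) / r)
    linarith
  have hprod_le : ∏ i : Fin n, mgf (X i) P t ≤
      Real.exp (∑ i : Fin n, (Real.exp (t * |y i|) - 1) / r) := by
    rw [Real.exp_sum]
    exact Finset.prod_le_prod (fun i _ => mgf_nonneg) fun i _ => hmgf_le i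
  -- quadratic bound on the exponent
  have hquad_i : ∀ i, Real.exp (t * |y i|) - 1 ≤ t * |y i| + t ^ 2 * (y i) ^ 2 / 2 := by
    intro i
    have hxnn : 0 ≤ -(t * |y i|) := by
      have := abs_nonneg (y i)
      nlinarith
    have hq := exp_neg_le_quad hxnn
    rw [neg_neg] at hq
    have habs : |y i| ^ 2 = (y i) ^ 2 := sq_abs (y i)
    nlinarith
  have hquad : ∑ i : Fin n, (Real.exp (t * |y i|) - 1) / r ≤ (t * L + t ^ 2 * Q / 2) / r := by
    rw [← Finset.sum_div]
    gcongr
    calc ∑ i : Fin n, (Real.exp (t * |y i|) - 1)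
        ≤ ∑ i : Fin n, (t * |y i| + t ^ 2 * (y i) ^ 2 / 2) :=
          Finset.sum_le_sum fun i _ => hquad_i i
      _ = t * L + t ^ 2 * Q / 2 := by
          rw [Finset.sum_add_distrib, ← Finset.mul_sum, ← hLdef]
          congr 1
          rw [← Finset.sum_div, ← Finset.mul_sum, ← hQdef]
  -- the exponent evaluates/bounds to -β²/(8r)
  have hval : -t * ε + (t * L + t ^ 2 * Q / 2) / r = -(L ^ 2 / (8 * Q * r)) := by
    rw [htdef, hεdef]
    field_simp
    ring
  have hexp_le : -t * ε + (t * L + t ^ 2 * Q / 2) / r ≤ -β ^ 2 / (8 * r) := by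
    rw [hval, neg_div, neg_le_neg_iff, div_le_div_iff₀ (by positivity) (by positivity)]
    nlinarith
  -- assemble the real-valued bound
  have hfinal : (P {ω | (∑ i, X i) ω ≤ ε}).toReal ≤ Real.exp (-β ^ 2 / (8 * r)) := by
    refine hchern.trans ?_
    calc Real.exp (-t * ε) * ∏ i : Fin n, mgf (X i) P t
        ≤ Real.exp (-t * ε) * Real.exp (∑ i : Fin n, (Real.exp (t * |y i|) - 1) / r) := by
          exact mul_le_mul_of_nonneg_left hprod_le (Real.exp_pos _).le
      _ = Real.exp (-t * ε + ∑ i : Fin n, (Real.exp (t * |y i|) - 1) / r) :=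
          (Real.exp_add _ _).symm
      _ ≤ Real.exp (-β ^ 2 / (8 * r)) := by
          apply Real.exp_le_exp.mpr
          refine le_trans ?_ hexp_le
          linarith [hquad]
  -- rewrite the event and conclude
  have hset : {ω | ∑ i ∈ Finset.univ.filter (fun i => σ ω i = j), |y i| ≤ L / (2 * r)} =
      {ω | (∑ i, X i) ω ≤ ε} := by
    ext ω
    simp only [Set.mem_setOf_eq, Finset.sum_apply, hεdef]
    rw [Finset.sum_filter]
    rfl
  rw [hset, ← ENNReal.ofReal_toReal (measure_ne_top P _)]
  exact ENNReal.ofReal_le_ofReal hfinal
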